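/- Let H be a separable complex Hilbert space and let P be a bounded idempotent operator on H. Then the intersection of the kernel of P with the orthogonal complement of the range of P equals the kernel of P + P*: N(P) ∩ R(P)^⊥ = N(P + P*). -/

import Mathlib

open ContinuousLinearMap

variable {H : Type*} [NormedAddCommGroup H] [InnerProductSpace ℂ H]
  [CompleteSpace H] [TopologicalSpace.SeparableSpace H]

/-- The absolute value `|A| = (A*A)^(1/2)` of a bounded operator. -/
noncomputable def absOp (A : H →L[ℂ] H) : H →L[ℂ] H := CFC.sqrt (star A * A)

/-- A symmetry is a self-adjoint unitary: `J = J* = J⁻¹`. -/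
def IsSymmetry (J : H →L[ℂ] H) : Prop := IsSelfAdjoint J ∧ J * J = 1

theorem stmt_3 (P : H →L[ℂ] H) (hP : P * P = P) :
    LinearMap.ker (P : H →ₗ[ℂ] H) ⊓ (LinearMap.range (P : H →ₗ[ℂ] H))ᗮ = LinearMap.ker ((P + star P : H →L[ℂ] H) : H →ₗ[ℂ] H) := by
  have hstar : star P = ContinuousLinearMap.adjoint P := rfl
  ext x
  simp only [Submodule.mem_inf, LinearMap.mem_ker, ContinuousLinearMap.coe_coe, ContinuousLinearMap.add_apply,
    Submodule.mem_orthogonal]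
  constructor
  · rintro ⟨h1, h2⟩
    have h3 : star P x = 0 := by
      rw [← inner_self_eq_zero (𝕜 := ℂ), hstar, ContinuousLinearMap.adjoint_inner_left]
      exact inner_eq_zero_symm.mpr (h2 _ ⟨_, rfl⟩)
    rw [h1, h3, add_zero]
  · intro h
    have e1 : star P x = -P x := by linear_combination (norm := abel) h
    have e2 : P (star P x) = star P x := by
      rw [e1, map_neg, ← ContinuousLinearMap.mul_apply, hP]
    have e3 : star P (P x) = P x := by
      have hpx : P x = -(star P x) := by rw [e1, neg_neg]
      rw [hpx, map_neg, ← ContinuousLinearMap.mul_apply, ← star_mul, hP]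
    have hn1 : (inner ℂ (P x) x : ℂ) = inner ℂ (P x) (P x) := by
      conv_lhs => rw [← e3, hstar]
      exact ContinuousLinearMap.adjoint_inner_left P x (P x)
    have hn2 : (inner ℂ (star P x) (star P x) : ℂ) = inner ℂ x (star P x) := by
      conv_lhs => rw [hstar, ContinuousLinearMap.adjoint_inner_left, ← hstar, e2]
    have h4 : (inner ℂ (P x) (P x) : ℂ) + inner ℂ (star P x) (star P x)
        = inner ℂ (P x) x - inner ℂ x (P x) := by
      rw [← hn1, hn2, e1, inner_neg_right]; ring
    have h5 : ‖P x‖ ^ 2 + ‖star P x‖ ^ 2 = 0 := by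
      rw [inner_self_eq_norm_sq_to_K, inner_self_eq_norm_sq_to_K] at h4
      have h5r := congrArg Complex.re h4
      rw [← inner_conj_symm x (P x), Complex.sub_re, Complex.conj_re, sub_self] at h5r
      simpa [← Complex.ofReal_pow] using h5r
    have hPx : P x = 0 := by
      have : ‖P x‖ ^ 2 = 0 := by nlinarith [sq_nonneg ‖P x‖, sq_nonneg ‖star P x‖]
      simpa using this
    have hPsx : star P x = 0 := by
      have : ‖star P x‖ ^ 2 = 0 := by nlinarith [sq_nonneg ‖P x‖, sq_nonneg ‖star P x‖]
      simpa using this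
    refine ⟨hPx, ?_⟩
    rintro u ⟨y, rfl⟩
    rw [ContinuousLinearMap.coe_coe, inner_eq_zero_symm, ← ContinuousLinearMap.adjoint_inner_left, ← hstar, hPsx,
      inner_zero_left]
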